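/- Let n be a finite index type, let G be a real n × n matrix, let ρ be a nonzero real number and t a real number, and set M = (1/ρ)·G + I, where I is the identity matrix. Then the matrix exponential satisfies exp(t·G) = e^(−ρt) · exp(ρt·M); equivalently, entrywise, for all indices a, b: (exp(t·G))_{a,b} = Σ_{r=0}^{∞} e^(−ρt) (ρt)^r / r! · (M^r)_{a,b}, where the series converges. In particular, the probabilities assigned by the uniformization formula P(N_U = r) = [e^(−ρt)(ρt)^r/r! · (M^r)_{a,b}] / (exp(Gt))_{a,b} sum to one over r whenever (exp(Gt))_{a,b} ≠ 0. -/

import Mathlib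

open Matrix

attribute [local instance] Matrix.linftyOpNormedRing Matrix.linftyOpNormedAlgebra

/-- Uniformization: for a real square matrix `G`, a nonzero rate `ρ` and a time
`t`, setting `M = ρ⁻¹ • G + I` one has `exp(tG) = e^{-ρt} exp(ρt M)`;
entrywise, `(exp(tG))_{a,b}` is the (convergent) sum of
`e^{-ρt}(ρt)^r/r! (M^r)_{a,b}` over `r`, and hence the uniformization
probabilities `e^{-ρt}(ρt)^r/r! (M^r)_{a,b} / (exp(tG))_{a,b}` sum to one
whenever `(exp(tG))_{a,b} ≠ 0`. -/
theorem uniformization_matrix_exponential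
    {n : Type*} [Fintype n] [DecidableEq n]
    (G : Matrix n n ℝ) (ρ t : ℝ) (hρ : ρ ≠ 0)
    (M : Matrix n n ℝ) (hM : M = ρ⁻¹ • G + 1) :
    NormedSpace.exp (t • G) = Real.exp (-ρ * t) • NormedSpace.exp ((ρ * t) • M) ∧
    (∀ a b : n,
      HasSum
        (fun r : ℕ => Real.exp (-ρ * t) * (ρ * t) ^ r / r.factorial * (M ^ r) a b)
        (NormedSpace.exp (t • G) a b)) ∧
    (∀ a b : n, NormedSpace.exp (t • G) a b ≠ 0 →
      HasSum
        (fun r : ℕ =>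
          Real.exp (-ρ * t) * (ρ * t) ^ r / r.factorial * (M ^ r) a b /
            NormedSpace.exp (t • G) a b)
        1) := by
  have hsplit : (ρ * t) • M = t • G + algebraMap ℝ (Matrix n n ℝ) (ρ * t) := by
    rw [hM, smul_add, smul_smul, Algebra.algebraMap_eq_smul_one]
    congr 1
    rw [mul_assoc, mul_comm t, ← mul_assoc, mul_inv_cancel₀ hρ, one_mul]
  have hcomm : Commute (t • G) (algebraMap ℝ (Matrix n n ℝ) (ρ * t)) :=
    (Algebra.commutes' _ _).symm
  have hexp : NormedSpace.exp ((ρ * t) • M)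
      = Real.exp (ρ * t) • NormedSpace.exp (t • G) := by
    rw [hsplit, Matrix.exp_add_of_commute _ _ hcomm]
    erw [← NormedSpace.algebraMap_exp_comm (𝕂 := ℝ) (𝔸 := Matrix n n ℝ)]
    rw [← Real.exp_eq_exp_ℝ,
      Algebra.algebraMap_eq_smul_one, mul_smul_one]
  have h1 : NormedSpace.exp (t • G)
      = Real.exp (-ρ * t) • NormedSpace.exp ((ρ * t) • M) := by
    rw [hexp, smul_smul, ← Real.exp_add]
    have : -ρ * t + ρ * t = 0 := by ring
    rw [this, Real.exp_zero, one_smul]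
  have h2 : ∀ a b : n,
      HasSum (fun r : ℕ => Real.exp (-ρ * t) * (ρ * t) ^ r / r.factorial * (M ^ r) a b)
        (NormedSpace.exp (t • G) a b) := by
    intro a b
    have hS := NormedSpace.exp_series_hasSum_exp' (𝕂 := ℝ) ((ρ * t) • M)
    let f : Matrix n n ℝ →L[ℝ] ℝ :=
      ⟨Matrix.entryLinearMap ℝ ℝ a b, (Matrix.entryLinearMap ℝ ℝ a b).continuous_of_finiteDimensional⟩
    have hS' := hS.mapL f
    have hS'' := hS'.mul_left (Real.exp (-ρ * t))
    convert hS'' using 2 with r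
    swap
    · show Real.exp (-ρ * t) * (ρ * t) ^ r / r.factorial * (M ^ r) a b
        = Real.exp (-ρ * t) * (((r.factorial : ℝ))⁻¹ • ((ρ * t) • M) ^ r) a b
      rw [smul_pow]
      simp only [Matrix.smul_apply, smul_eq_mul]
      field_simp
    · rfl
    · show NormedSpace.exp (t • G) a b
        = Real.exp (-ρ * t) * (NormedSpace.exp ((ρ * t) • M)) a b
      rw [h1]
      simp
  refine ⟨h1, h2, fun a b hne => ?_⟩
  simpa [div_self hne] using (h2 a b).div_const (NormedSpace.exp (t • G) a b)
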